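/- Let S, A', B' be subspaces of ℝ^N, set W = S ⊓ (A')ᗮ and V = S ⊓ Wᗮ, and assume W ≤ (B')ᗮ. Assume moreover that either (a) dim V > 0, there exists c₀ > 0 with ⟨x, (P_{A'} − P_{B'})x⟩ ≥ c₀‖x‖² for all x ∈ V, and 0 < α < c₀/(c₀+1); or (b) dim V = 0 and 0 < α < 1. Then the matrix K := (I − P_S) + α(P_{A'} − P_{B'}) is positive semidefinite, its kernel equals W, and rank(K) = N − dim S + dim V. -/

import Mathlib

noncomputable def projCLM {E : Type*} [NormedAddCommGroup E] [InnerProductSpace ℝ E]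
    [FiniteDimensional ℝ E] (S : Submodule ℝ E) : E →L[ℝ] E :=
  S.subtypeL.comp S.orthogonalProjectionOnto

section helpers
variable {E : Type*} [NormedAddCommGroup E] [InnerProductSpace ℝ E] [FiniteDimensional ℝ E]

lemma projCLM_mem (S : Submodule ℝ E) (x : E) : projCLM S x ∈ S := (S.orthogonalProjectionOnto x).2

lemma sub_projCLM_mem (S : Submodule ℝ E) (x : E) : x - projCLM S x ∈ Sᗮ :=
  S.sub_starProjection_mem_orthogonal x

lemma projCLM_eq_self (S : Submodule ℝ E) {x : E} (hx : x ∈ S) : projCLM S x = x :=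
  S.starProjection_eq_self_iff.mpr hx

lemma projCLM_eq_zero (S : Submodule ℝ E) {x : E} (hx : x ∈ Sᗮ) : projCLM S x = 0 := by
  simp [projCLM, Submodule.orthogonalProjectionOnto_apply_of_mem_orthogonal hx]

lemma norm_sq_projCLM (S : Submodule ℝ E) (x : E) :
    ‖x‖ ^ 2 = ‖projCLM S x‖ ^ 2 + ‖x - projCLM S x‖ ^ 2 := by
  have h : (inner ℝ (projCLM S x) (x - projCLM S x) : ℝ) = 0 :=
    Submodule.inner_right_of_mem_orthogonal (projCLM_mem S x) (sub_projCLM_mem S x)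
  have := norm_add_sq_real (projCLM S x) (x - projCLM S x)
  simpa [h] using this

lemma norm_projCLM_le (S : Submodule ℝ E) (x : E) : ‖projCLM S x‖ ≤ ‖x‖ := by
  have := norm_sq_projCLM S x
  nlinarith [norm_nonneg x, norm_nonneg (projCLM S x), sq_nonneg ‖x - projCLM S x‖]

lemma norm_sub_projCLM_le (S : Submodule ℝ E) (x : E) : ‖x - projCLM S x‖ ≤ ‖x‖ := by
  have := norm_sq_projCLM S x
  nlinarith [norm_nonneg x, norm_nonneg (x - projCLM S x), sq_nonneg ‖projCLM S x‖]

lemma norm_projCLM_sub_le (A B : Submodule ℝ E) (x : E) :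
    ‖(projCLM A - projCLM B) x‖ ≤ ‖x‖ := by
  set a := projCLM A (x - projCLM B x) with ha
  set b := projCLM B x - projCLM A (projCLM B x) with hb
  have hD : (projCLM A - projCLM B) x = a - b := by
    simp only [ContinuousLinearMap.sub_apply, ha, hb, map_sub]
    abel
  have hab : (inner ℝ a (-b) : ℝ) = 0 := by
    rw [inner_neg_right]
    have := Submodule.inner_right_of_mem_orthogonal (projCLM_mem A (x - projCLM B x))
      (sub_projCLM_mem A (projCLM B x))
    simp; exact this
  have hsq : ‖a - b‖ ^ 2 = ‖a‖ ^ 2 + ‖b‖ ^ 2 := by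
    have := norm_add_sq_real a (-b)
    simp only [← sub_eq_add_neg, norm_neg] at this
    simpa [hab] using this
  have h1 : ‖a‖ ≤ ‖x - projCLM B x‖ := norm_projCLM_le A _
  have h2 : ‖b‖ ≤ ‖projCLM B x‖ := norm_sub_projCLM_le A _
  have h3 := norm_sq_projCLM B x
  rw [hD]
  nlinarith [norm_nonneg (a - b), norm_nonneg x, norm_nonneg a, norm_nonneg b,
    norm_nonneg (x - projCLM B x), norm_nonneg (projCLM B x)]

end helpers

/-- Arithmetic core: strict positivity of the quadratic form in case (a). -/
lemma quad_pos_aux (α c₀ s t : ℝ) (hα0 : 0 < α) (hc₀ : 0 < c₀)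
    (hαc : α * (c₀ + 1) < c₀) (hs : 0 ≤ s) (ht : 0 ≤ t) (hst : 0 < s ^ 2 + t ^ 2) :
    0 < (1 - α) * t ^ 2 - 2 * α * s * t + α * c₀ * s ^ 2 := by
  have hα1 : α < 1 := by nlinarith
  rcases eq_or_lt_of_le hs with hs0 | hs0
  · have ht0 : 0 < t := by nlinarith
    rw [← hs0]
    nlinarith
  · nlinarith [sq_nonneg ((1 - α) * t - α * s), mul_pos (mul_pos hα0 hs0) hs0,
      mul_pos hα0 hc₀]

set_option maxHeartbeats 1000000 in
/-- Lemma 7 in the Appendix of the paper: positive semidefiniteness, kernel and rank of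
`K = (I − P_S) + α(P_{A'} − P_{B'})`. -/
theorem K_psd_kernel_rank
    (N : ℕ) (S A' B' W V : Submodule ℝ (EuclideanSpace ℝ (Fin N)))
    (hW : W = S ⊓ A'ᗮ) (hV : V = S ⊓ Wᗮ)
    (hWB : W ≤ B'ᗮ)
    (α : ℝ)
    (hcase :
      (0 < Module.finrank ℝ V ∧
        (∃ c₀ : ℝ, 0 < c₀ ∧
          (∀ x ∈ V, c₀ * ‖x‖ ^ 2 ≤ (inner ℝ x ((projCLM A' - projCLM B') x) : ℝ)) ∧
          0 < α ∧ α < c₀ / (c₀ + 1))) ∨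
      (Module.finrank ℝ V = 0 ∧ 0 < α ∧ α < 1)) :
    (∀ x : EuclideanSpace ℝ (Fin N),
        0 ≤ (inner ℝ x
          ((((ContinuousLinearMap.id ℝ (EuclideanSpace ℝ (Fin N))) - projCLM S)
            + α • (projCLM A' - projCLM B')) x) : ℝ)) ∧
    LinearMap.ker ((((ContinuousLinearMap.id ℝ (EuclideanSpace ℝ (Fin N))) - projCLM S)
        + α • (projCLM A' - projCLM B')) : EuclideanSpace ℝ (Fin N) →ₗ[ℝ] EuclideanSpace ℝ (Fin N)) = W ∧
    Module.finrank ℝ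
        (LinearMap.range ((((ContinuousLinearMap.id ℝ (EuclideanSpace ℝ (Fin N))) - projCLM S)
          + α • (projCLM A' - projCLM B')) : EuclideanSpace ℝ (Fin N) →ₗ[ℝ] EuclideanSpace ℝ (Fin N)))
      = N - Module.finrank ℝ S + Module.finrank ℝ V := by
  set D : (EuclideanSpace ℝ (Fin N)) →L[ℝ] (EuclideanSpace ℝ (Fin N)) := projCLM A' - projCLM B' with hD
  set K : (EuclideanSpace ℝ (Fin N)) →L[ℝ] (EuclideanSpace ℝ (Fin N)) := ((ContinuousLinearMap.id ℝ (EuclideanSpace ℝ (Fin N))) - projCLM S) + α • D with hK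
  have hKapp : ∀ x : (EuclideanSpace ℝ (Fin N)), K x = (x - projCLM S x) + α • (D x) := by
    intro x
    simp [hK, ContinuousLinearMap.add_apply, ContinuousLinearMap.sub_apply]
  have hα0 : 0 < α := by
    rcases hcase with ⟨_, c₀, hc₀, _, hα, _⟩ | ⟨_, hα, _⟩ <;> exact hα
  have hWS : W ≤ S := hW ▸ inf_le_left
  have hWA : W ≤ A'ᗮ := hW ▸ inf_le_right
  -- K vanishes on W
  have hKW : ∀ w ∈ W, K w = 0 := by
    intro w hw
    have h1 : projCLM S w = w := projCLM_eq_self S (hWS hw)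
    have h2 : projCLM A' w = 0 := projCLM_eq_zero A' (hWA hw)
    have h3 : projCLM B' w = 0 := projCLM_eq_zero B' (hWB hw)
    rw [hKapp]
    simp [hD, ContinuousLinearMap.sub_apply, h1, h2, h3]
  -- strict positivity on Wᗮ \ {0}
  have key : ∀ y : (EuclideanSpace ℝ (Fin N)), y ∈ Wᗮ → y ≠ 0 → 0 < (inner ℝ y (K y) : ℝ) := by
    intro y hy hy0
    set v := projCLM S y with hv
    set u := y - projCLM S y with hu
    have hvS : v ∈ S := projCLM_mem S y
    have huS : u ∈ Sᗮ := sub_projCLM_mem S y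
    have huW : u ∈ Wᗮ := Submodule.orthogonal_le hWS huS
    have hvW : v ∈ Wᗮ := by
      have h : v = y - u := by rw [hu, hv]; abel
      rw [h]; exact Submodule.sub_mem _ hy huW
    have hvV : v ∈ V := hV ▸ Submodule.mem_inf.mpr ⟨hvS, hvW⟩
    have hyvu : y = v + u := by rw [hu, hv]; abel
    have hvu : (inner ℝ v u : ℝ) = 0 := Submodule.inner_right_of_mem_orthogonal hvS huS
    have hnorm : ‖y‖ ^ 2 = ‖v‖ ^ 2 + ‖u‖ ^ 2 := norm_sq_projCLM S y
    have hyn : 0 < ‖y‖ := norm_pos_iff.mpr hy0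
    have h1 : (inner ℝ y u : ℝ) = ‖u‖ ^ 2 := by
      have hadd : (inner ℝ (v + u) u : ℝ) = inner ℝ v u + inner ℝ u u := inner_add_left v u u
      rw [← hyvu] at hadd
      rw [hadd, hvu, real_inner_self_eq_norm_sq, zero_add]
    have hiK : (inner ℝ y (K y) : ℝ) = ‖u‖ ^ 2 + α * (inner ℝ y (D y) : ℝ) := by
      rw [hKapp, inner_add_right, real_inner_smul_right, ← hu, h1]
    have hDsplit : (inner ℝ y (D y) : ℝ) =
        (inner ℝ v (D v) : ℝ) + (inner ℝ v (D u) : ℝ) + (inner ℝ u (D v) : ℝ)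
          + (inner ℝ u (D u) : ℝ) := by
      conv_lhs => rw [hyvu]
      rw [map_add, inner_add_left, inner_add_right, inner_add_right]
      ring
    have hDn : ∀ z : (EuclideanSpace ℝ (Fin N)), ‖D z‖ ≤ ‖z‖ := fun z => norm_projCLM_sub_le A' B' z
    have hb1 : -(‖v‖ * ‖u‖) ≤ (inner ℝ v (D u) : ℝ) := by
      have h := abs_real_inner_le_norm v (D u)
      have h3 := hDn u
      have h4 := neg_abs_le (inner ℝ v (D u) : ℝ)
      nlinarith [norm_nonneg v, norm_nonneg u]
    have hb2 : -(‖v‖ * ‖u‖) ≤ (inner ℝ u (D v) : ℝ) := by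
      have h := abs_real_inner_le_norm u (D v)
      have h3 := hDn v
      have h4 := neg_abs_le (inner ℝ u (D v) : ℝ)
      nlinarith [norm_nonneg v, norm_nonneg u]
    have hb3 : -(‖u‖ * ‖u‖) ≤ (inner ℝ u (D u) : ℝ) := by
      have h := abs_real_inner_le_norm u (D u)
      have h3 := hDn u
      have h4 := neg_abs_le (inner ℝ u (D u) : ℝ)
      nlinarith [norm_nonneg u]
    rcases hcase with ⟨_, c₀, hc₀, hcbound, _, hαc⟩ | ⟨hV0, _, hα1⟩
    · -- case (a)
      have hvb : c₀ * ‖v‖ ^ 2 ≤ (inner ℝ v (D v) : ℝ) := hcbound v hvV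
      have hαc' : α * (c₀ + 1) < c₀ := by
        rw [lt_div_iff₀ (by linarith : (0:ℝ) < c₀ + 1)] at hαc
        exact hαc
      have hst : 0 < ‖v‖ ^ 2 + ‖u‖ ^ 2 := by rw [← hnorm]; positivity
      have hquad := quad_pos_aux α c₀ ‖v‖ ‖u‖ hα0 hc₀ hαc' (norm_nonneg v) (norm_nonneg u) hst
      have hDlow : c₀ * ‖v‖ ^ 2 - 2 * (‖v‖ * ‖u‖) - ‖u‖ * ‖u‖ ≤ (inner ℝ y (D y) : ℝ) := by
        rw [hDsplit]; linarith
      have hmul : α * (c₀ * ‖v‖ ^ 2 - 2 * (‖v‖ * ‖u‖) - ‖u‖ * ‖u‖) ≤ α * (inner ℝ y (D y) : ℝ) :=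
        mul_le_mul_of_nonneg_left hDlow (le_of_lt hα0)
      rw [hiK]
      nlinarith
    · -- case (b)
      have hVbot : V = ⊥ := Submodule.finrank_eq_zero.mp hV0
      have hv0 : v = 0 := by
        have h := hvV; rw [hVbot] at h; simpa using h
      have hDv0 : D v = 0 := by rw [hv0, map_zero]
      have hun : 0 < ‖u‖ := by
        have : u ≠ 0 := by
          intro h0
          apply hy0
          rw [hyvu, hv0, h0, add_zero]
        exact norm_pos_iff.mpr this
      have hzero : (inner ℝ v (D u) : ℝ) = 0 := by rw [hv0, inner_zero_left]
      have hzero2 : (inner ℝ u (D v) : ℝ) = 0 := by rw [hDv0, inner_zero_right]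
      have hzero3 : (inner ℝ v (D v) : ℝ) = 0 := by rw [hv0, inner_zero_left]
      rw [hiK, hDsplit, hzero, hzero2, hzero3]
      nlinarith [mul_le_mul_of_nonneg_left hb3 hα0.le, mul_pos hun hun]
  -- part 1
  have part1 : ∀ x : (EuclideanSpace ℝ (Fin N)), 0 ≤ (inner ℝ x (K x) : ℝ) := by
    intro x
    set w := projCLM W x with hw
    set y := x - projCLM W x with hy
    have hwW : w ∈ W := projCLM_mem W x
    have hyW : y ∈ Wᗮ := sub_projCLM_mem W x
    have hxwy : x = w + y := by rw [hy, hw]; abel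
    have hKx : K x = K y := by
      conv_lhs => rw [hxwy]
      rw [map_add, hKW w hwW, zero_add]
    have hwKy : (inner ℝ w (K y) : ℝ) = 0 := by
      rw [hKapp, inner_add_right, real_inner_smul_right]
      have e1 : (inner ℝ w (y - projCLM S y) : ℝ) = 0 :=
        Submodule.inner_right_of_mem_orthogonal (hWS hwW) (sub_projCLM_mem S y)
      have e2 : (inner ℝ w (projCLM A' y) : ℝ) = 0 :=
        Submodule.inner_left_of_mem_orthogonal (projCLM_mem A' y) (hWA hwW)
      have e3 : (inner ℝ w (projCLM B' y) : ℝ) = 0 :=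
        Submodule.inner_left_of_mem_orthogonal (projCLM_mem B' y) (hWB hwW)
      have e4 : (inner ℝ w (D y) : ℝ) = 0 := by
        rw [hD, ContinuousLinearMap.sub_apply, inner_sub_right, e2, e3, sub_zero]
      rw [e1, e4, mul_zero, add_zero]
    have hxK : (inner ℝ x (K x) : ℝ) = (inner ℝ y (K y) : ℝ) := by
      rw [hKx]
      conv_lhs => rw [hxwy]
      rw [inner_add_left, hwKy, zero_add]
    rw [hxK]
    rcases eq_or_ne y 0 with h0 | h0
    · rw [h0]; simp
    · exact le_of_lt (key y hyW h0)
  -- part 2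
  have part2 : LinearMap.ker (K : (EuclideanSpace ℝ (Fin N)) →ₗ[ℝ] (EuclideanSpace ℝ (Fin N))) = W := by
    ext x
    simp only [LinearMap.mem_ker, ContinuousLinearMap.coe_coe]
    constructor
    · intro hx
      set w := projCLM W x with hw
      set y := x - projCLM W x with hy
      have hwW : w ∈ W := projCLM_mem W x
      have hyW : y ∈ Wᗮ := sub_projCLM_mem W x
      have hxwy : x = w + y := by rw [hy, hw]; abel
      have hKy : K y = 0 := by
        have h : K x = K w + K y := by conv_lhs => rw [hxwy, map_add]
        rw [hKW w hwW, zero_add] at h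
        rw [← h]; exact hx
      by_contra hxW
      have hy0 : y ≠ 0 := by
        intro h
        exact hxW (by rw [hxwy, h, add_zero]; exact hwW)
      have hpos := key y hyW hy0
      rw [hKy] at hpos
      simp at hpos
    · intro hx
      exact hKW x hx
  refine ⟨part1, part2, ?_⟩
  -- part 3
  have hrn := LinearMap.finrank_range_add_finrank_ker (K : (EuclideanSpace ℝ (Fin N)) →ₗ[ℝ] (EuclideanSpace ℝ (Fin N)))
  have hEdim : Module.finrank ℝ (EuclideanSpace ℝ (Fin N)) = N := finrank_euclideanSpace_fin
  have hWV : Module.finrank ℝ W + Module.finrank ℝ V = Module.finrank ℝ S := by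
    rw [hV, inf_comm]
    exact Submodule.finrank_add_inf_finrank_orthogonal hWS
  have hSN : Module.finrank ℝ S ≤ N :=
    le_trans (Submodule.finrank_le S) (le_of_eq hEdim)
  rw [hEdim] at hrn
  have hrn2 : Module.finrank ℝ (LinearMap.range (K : (EuclideanSpace ℝ (Fin N)) →ₗ[ℝ] (EuclideanSpace ℝ (Fin N)))) + Module.finrank ℝ (LinearMap.ker (K : (EuclideanSpace ℝ (Fin N)) →ₗ[ℝ] (EuclideanSpace ℝ (Fin N)))) = N :=
    hrn
  rw [part2] at hrn2
  have e : ((ContinuousLinearMap.id ℝ (EuclideanSpace ℝ (Fin N)) : (EuclideanSpace ℝ (Fin N)) →ₗ[ℝ] (EuclideanSpace ℝ (Fin N))) - (projCLM S : (EuclideanSpace ℝ (Fin N)) →ₗ[ℝ] (EuclideanSpace ℝ (Fin N)))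
      + α • ((projCLM A' : (EuclideanSpace ℝ (Fin N)) →ₗ[ℝ] (EuclideanSpace ℝ (Fin N))) - (projCLM B' : (EuclideanSpace ℝ (Fin N)) →ₗ[ℝ] (EuclideanSpace ℝ (Fin N)))))
      = (K : (EuclideanSpace ℝ (Fin N)) →ₗ[ℝ] (EuclideanSpace ℝ (Fin N))) := by
    ext x; simp [hK, hD]
  rw [e]
  omega
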